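/- If G₁ and G₂ are graphs whose vertex sets are each partitioned into vertex-disjoint maximal cliques of constant sizes s₁ and s₂ respectively (with m₁ and m₂ cliques), and s₁ ≤ s₂, then the tensor (categorical) product G₁ × G₂ admits a partition of its vertex set into m₁·m₂·s₂ vertex-disjoint cliques each of size s₁. -/

import Mathlib

/-- The tensor (categorical) product of two simple graphs. -/
def tensorGraph {V₁ V₂ : Type*} (G₁ : SimpleGraph V₁) (G₂ : SimpleGraph V₂) :
    SimpleGraph (V₁ × V₂) where
  Adj a b := G₁.Adj a.1 b.1 ∧ G₂.Adj a.2 b.2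
  symm := ⟨fun _ _ h => ⟨h.1.symm, h.2.symm⟩⟩
  loopless := ⟨fun a h => G₁.loopless.irrefl a.1 h.1⟩

/-- If the vertex sets of `G₁` and `G₂` are partitioned into `m₁` resp. `m₂`
vertex-disjoint maximal cliques, all of size `s₁` resp. `s₂` with `s₁ ≤ s₂`, then the
tensor product `G₁ × G₂` admits a partition of its vertex set into `m₁ m₂ s₂`
vertex-disjoint cliques, each of size `s₁`. -/
theorem tensor_clique_partition {V₁ V₂ : Type*} [Fintype V₁] [Fintype V₂]
    (G₁ : SimpleGraph V₁) (G₂ : SimpleGraph V₂) (m₁ m₂ s₁ s₂ : ℕ) (hs : s₁ ≤ s₂)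
    (f₁ : V₁ → Fin m₁) (f₂ : V₂ → Fin m₂)
    (h₁ : ∀ c, G₁.IsClique {v | f₁ v = c} ∧ {v | f₁ v = c}.ncard = s₁ ∧
      ∀ v ∉ {v | f₁ v = c}, ¬G₁.IsClique (insert v {v | f₁ v = c}))
    (h₂ : ∀ c, G₂.IsClique {v | f₂ v = c} ∧ {v | f₂ v = c}.ncard = s₂ ∧
      ∀ v ∉ {v | f₂ v = c}, ¬G₂.IsClique (insert v {v | f₂ v = c})) :
    ∃ f : V₁ × V₂ → Fin (m₁ * m₂ * s₂),
      ∀ c, (tensorGraph G₁ G₂).IsClique {v | f v = c} ∧ {v | f v = c}.ncard = s₁ := by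
  classical
  rcases Nat.eq_zero_or_pos (m₁ * m₂ * s₂) with hn | hn
  · -- degenerate case
    have hempty : IsEmpty (V₁ × V₂) := by
      constructor
      rintro ⟨v, w⟩
      rcases Nat.mul_eq_zero.mp hn with h0 | h0
      · rcases Nat.mul_eq_zero.mp h0 with h0 | h0
        · exact (h0 ▸ f₁ v).elim0
        · exact (h0 ▸ f₂ w).elim0
      · have hpos : 0 < ({x | f₂ x = f₂ w} : Set V₂).ncard :=
          (Set.ncard_pos (Set.toFinite _)).mpr ⟨w, rfl⟩
        rw [(h₂ (f₂ w)).2.1, h0] at hpos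
        exact absurd hpos (lt_irrefl 0)
    refine ⟨fun p => (hempty.false p).elim, fun c => ?_⟩
    exact ((hn ▸ c : Fin 0)).elim0
  · -- main case
    have hs₂ : s₂ ≠ 0 := by
      intro h; rw [h, Nat.mul_zero] at hn; exact absurd hn (lt_irrefl 0)
    haveI : NeZero s₂ := ⟨hs₂⟩
    -- cardinality of fibers as subtypes
    have card₁ : ∀ c : Fin m₁, Fintype.card {v // f₁ v = c} = s₁ := by
      intro c
      have := (h₁ c).2.1
      rwa [Set.ncard_eq_toFinset_card', Set.toFinset_setOf, ← Fintype.card_subtype] at this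
    have card₂ : ∀ c : Fin m₂, Fintype.card {w // f₂ w = c} = s₂ := by
      intro c
      have := (h₂ c).2.1
      rwa [Set.ncard_eq_toFinset_card', Set.toFinset_setOf, ← Fintype.card_subtype] at this
    set E₁ : (c : Fin m₁) → {v // f₁ v = c} ≃ Fin s₁ :=
      fun c => Fintype.equivFinOfCardEq (card₁ c) with hE₁
    set E₂ : (c : Fin m₂) → {w // f₂ w = c} ≃ Fin s₂ :=
      fun c => Fintype.equivFinOfCardEq (card₂ c) with hE₂
    -- global rank functions
    set g₁ : V₁ → Fin s₂ := fun v =>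
      ⟨(E₁ (f₁ v) ⟨v, rfl⟩).val, lt_of_lt_of_le (E₁ (f₁ v) ⟨v, rfl⟩).isLt hs⟩ with hg₁
    set g₂ : V₂ → Fin s₂ := fun w => E₂ (f₂ w) ⟨w, rfl⟩ with hg₂
    -- cast lemmas
    have cast₁ : ∀ (c : Fin m₁) (v : V₁) (h : f₁ v = c),
        E₁ (f₁ v) ⟨v, rfl⟩ = E₁ c ⟨v, h⟩ := by
      intro c v h; subst h; rfl
    have cast₂ : ∀ (c : Fin m₂) (w : V₂) (h : f₂ w = c),
        g₂ w = E₂ c ⟨w, h⟩ := by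
      intro c w h; subst h; rfl
    -- injectivity on fibers
    have inj₁ : ∀ v v' : V₁, f₁ v = f₁ v' → g₁ v = g₁ v' → v = v' := by
      intro v v' h he
      have hval := congrArg Fin.val he
      simp only [hg₁] at hval
      rw [cast₁ (f₁ v) v' h.symm] at hval
      have := (E₁ (f₁ v)).injective (Fin.ext hval)
      exact congrArg Subtype.val this
    have inj₂ : ∀ w w' : V₂, f₂ w = f₂ w' → g₂ w = g₂ w' → w = w' := by
      intro w w' h he
      rw [cast₂ (f₂ w) w rfl, cast₂ (f₂ w) w' h.symm] at he
      exact congrArg Subtype.val ((E₂ (f₂ w)).injective he)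
    -- properties of the canonical section of g₂
    have sec₂ : ∀ (c : Fin m₂) (t : Fin s₂),
        f₂ ((E₂ c).symm t).val = c ∧ g₂ ((E₂ c).symm t).val = t := by
      intro c t
      refine ⟨((E₂ c).symm t).prop, ?_⟩
      rw [cast₂ c ((E₂ c).symm t).val ((E₂ c).symm t).prop]
      simp
    -- the encoding equivalence
    set E : (Fin m₁ × Fin m₂) × Fin s₂ ≃ Fin (m₁ * m₂ * s₂) :=
      (((finProdFinEquiv : Fin m₁ × Fin m₂ ≃ Fin (m₁ * m₂)).prodCongr
        (Equiv.refl (Fin s₂)))).trans finProdFinEquiv with hE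
    refine ⟨fun p => E ((f₁ p.1, f₂ p.2), g₂ p.2 - g₁ p.1), ?_⟩
    intro c
    obtain ⟨⟨⟨c₁, c₂⟩, k⟩, hc⟩ : ∃ d, E d = c := ⟨E.symm c, E.apply_symm_apply c⟩
    have hmem : ∀ p : V₁ × V₂,
        (E ((f₁ p.1, f₂ p.2), g₂ p.2 - g₁ p.1) = c) ↔
        (f₁ p.1 = c₁ ∧ f₂ p.2 = c₂ ∧ g₂ p.2 - g₁ p.1 = k) := by
      intro p
      rw [← hc, E.apply_eq_iff_eq, Prod.ext_iff, Prod.ext_iff]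
      tauto
    constructor
    · -- clique
      rintro ⟨v, w⟩ hm ⟨v', w'⟩ hm' hne
      simp only [Set.mem_setOf_eq, hmem] at hm hm'
      obtain ⟨ha1, ha2, ha3⟩ := hm
      obtain ⟨hb1, hb2, hb3⟩ := hm'
      have hvne : v ≠ v' := by
        rintro rfl
        have hgw : g₂ w = g₂ w' := by
          have := ha3.trans hb3.symm
          exact sub_left_injective this
        exact hne (by rw [inj₂ w w' (ha2.trans hb2.symm) hgw])
      have hwne : w ≠ w' := by
        rintro rfl
        have hgv : g₁ v = g₁ v' := by
          have h3 := ha3.trans hb3.symm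
          have := sub_right_injective h3
          exact this
        exact hne (by rw [inj₁ v v' (ha1.trans hb1.symm) hgv])
      exact ⟨(h₁ c₁).1 ha1 hb1 hvne, (h₂ c₂).1 ha2 hb2 hwne⟩
    · -- cardinality
      set ψ : V₁ → V₁ × V₂ := fun v => (v, ((E₂ c₂).symm (g₁ v + k)).val) with hψ
      have himg : {p : V₁ × V₂ | E ((f₁ p.1, f₂ p.2), g₂ p.2 - g₁ p.1) = c}
          = ψ '' {v | f₁ v = c₁} := by
        ext ⟨v, w⟩
        simp only [Set.mem_setOf_eq, hmem, Set.mem_image]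
        constructor
        · rintro ⟨ha1, ha2, ha3⟩
          refine ⟨v, ha1, ?_⟩
          have hw : g₂ w = g₁ v + k := by
            rwa [sub_eq_iff_eq_add'] at ha3
          have hsec := sec₂ c₂ (g₁ v + k)
          have : w = ((E₂ c₂).symm (g₁ v + k)).val :=
            inj₂ w _ (ha2.trans hsec.1.symm) (hw.trans hsec.2.symm)
          simp [hψ, ← this]
        · rintro ⟨x, hx, hxe⟩
          obtain ⟨rfl, rfl⟩ : x = v ∧ ((E₂ c₂).symm (g₁ x + k)).val = w :=
            ⟨congrArg Prod.fst hxe, congrArg Prod.snd hxe⟩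
          have hsec := sec₂ c₂ (g₁ x + k)
          exact ⟨hx, hsec.1, by rw [hsec.2]; exact add_sub_cancel_left _ _⟩
      rw [himg, Set.ncard_image_of_injective _ (fun a b h => congrArg Prod.fst h)]
      exact (h₁ c₁).2.1
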